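/- Let n be a positive natural number, p : Fin n → ℝ with 0 < p_i < 1 for all i, and let m be a real number with 0 < m < n. Define ψ′(t) = ∑_{i=1}^n p_i·e^t / (1 − p_i + p_i·e^t). Then there exists a unique t* ∈ ℝ (the saddle point) satisfying ψ′(t*) = m. -/

import Mathlib

open Real Filter

/-- Existence and uniqueness of the saddle point: for `0 < m < n` there is a unique
`t⋆ ∈ ℝ` with `ψ′(t⋆) = ∑ᵢ pᵢ e^{t⋆} / (1 − pᵢ + pᵢ e^{t⋆}) = m`, when every
`pᵢ ∈ (0,1)`. -/
theorem saddle_point_exists_unique (n : ℕ) (hn : 0 < n) (p : Fin n → ℝ)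
    (hp : ∀ i, 0 < p i ∧ p i < 1) (m : ℝ) (hm0 : 0 < m) (hmn : m < n)
    (ψ' : ℝ → ℝ)
    (hψ' : ∀ t, ψ' t = ∑ i, p i * Real.exp t / (1 - p i + p i * Real.exp t)) :
    ∃! tstar : ℝ, ψ' tstar = m := by
  have hd : ∀ (i : Fin n) (t : ℝ), 0 < 1 - p i + p i * Real.exp t := by
    intro i t
    have h1 := (hp i).1; have h2 := (hp i).2
    have he := Real.exp_pos t
    nlinarith
  set g : ℝ → ℝ := fun t => ∑ i, p i * Real.exp t / (1 - p i + p i * Real.exp t) with hg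
  have hψg : ∀ t, ψ' t = g t := hψ'
  have hmono : StrictMono g := by
    intro a b hab
    apply Finset.sum_lt_sum_of_nonempty
    · have : Nonempty (Fin n) := ⟨⟨0, hn⟩⟩
      exact Finset.univ_nonempty
    · intro i _
      have h1 := (hp i).1; have h2 := (hp i).2
      have hea := Real.exp_pos a; have heb := Real.exp_pos b
      have hlt : Real.exp a < Real.exp b := Real.exp_lt_exp.mpr hab
      rw [div_lt_div_iff₀ (hd i a) (hd i b)]
      have key : p i * (1 - p i) * Real.exp a < p i * (1 - p i) * Real.exp b :=
        mul_lt_mul_of_pos_left hlt (by nlinarith)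
      nlinarith [key]
  have hcont : Continuous g := by
    apply continuous_finset_sum
    intro i _
    exact (continuous_const.mul Real.continuous_exp).div
      (continuous_const.add (continuous_const.mul Real.continuous_exp))
      (fun t => (hd i t).ne')
  have hbot : Tendsto g atBot (nhds 0) := by
    have h0 : Tendsto g atBot (nhds (∑ _i : Fin n, (0:ℝ))) := by
      apply tendsto_finset_sum
      intro i _
      have hnum : Tendsto (fun t => p i * Real.exp t) atBot (nhds 0) := by
        simpa using Real.tendsto_exp_atBot.const_mul (p i)
      have hden : Tendsto (fun t => 1 - p i + p i * Real.exp t) atBot (nhds (1 - p i)) := by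
        simpa using tendsto_const_nhds.add hnum
      have := hnum.div hden (by linarith [(hp i).2])
      rw [zero_div] at this; exact this
    simpa using h0
  have htop : Tendsto g atTop (nhds n) := by
    have h1 : Tendsto g atTop (nhds (∑ _i : Fin n, (1:ℝ))) := by
      apply tendsto_finset_sum
      intro i _
      have hpi := (hp i).1
      have heq : ∀ t : ℝ, p i * Real.exp t / (1 - p i + p i * Real.exp t)
          = p i / ((1 - p i) * Real.exp (-t) + p i) := by
        intro t
        have he := Real.exp_pos t
        have h2 := (hp i).2
        have hinv := inv_pos.mpr he
        have hden0 : 0 < (1 - p i) * (Real.exp t)⁻¹ + p i := by nlinarith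
        rw [Real.exp_neg, div_eq_div_iff (hd i t).ne' hden0.ne']
        field_simp
      have hden : Tendsto (fun t : ℝ => (1 - p i) * Real.exp (-t) + p i) atTop
          (nhds (p i)) := by
        have : Tendsto (fun t : ℝ => Real.exp (-t)) atTop (nhds 0) :=
          Real.tendsto_exp_atBot.comp tendsto_neg_atTop_atBot
        simpa using (this.const_mul (1 - p i)).add tendsto_const_nhds
      have := (tendsto_const_nhds (x := p i) (f := atTop)).div hden hpi.ne'
      rw [div_self hpi.ne'] at this
      simp only [heq]; exact this
    simpa [Finset.sum_const, Finset.card_fin, nsmul_eq_mul] using h1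
  obtain ⟨t1, ht1⟩ : ∃ t, g t < m := (hbot.eventually_lt_const hm0).exists
  obtain ⟨t2, ht2⟩ : ∃ t, m < g t := (htop.eventually_const_lt hmn).exists
  have ht12 : t1 ≤ t2 := by
    by_contra h
    push_neg at h
    exact absurd (hmono h) (by linarith)
  obtain ⟨t, _, ht⟩ := intermediate_value_Icc ht12 hcont.continuousOn
    ⟨ht1.le, ht2.le⟩
  refine ⟨t, ?_, fun y hy => ?_⟩
  · show ψ' t = m
    rw [hψg]; exact ht
  · have hy' : ψ' y = m := hy
    rw [hψg] at hy'
    exact hmono.injective (hy'.trans ht.symm)
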